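/- arXiv:1810.11767 — 7 statements merged into one kernel-verified Lean document; each statement's English description precedes it below -/
import Mathlib

section
/- Under Assumption 2, if a continuous function u : ℝⁿ → ℝ satisfies the relaxed constraints, then {x ∈ B(0, R) : u(x) < 1} is a robust region of attraction, i.e., {x ∈ B(0, R) : u(x) < 1} ⊆ R. -/
open Metric Set Filter MeasureTheory

noncomputable section

abbrev St (n : ℕ) := EuclideanSpace ℝ (Fin n)

/-- Trajectory of the perturbed discrete-time system. -/
def traj {n m : ℕ} (f : St n → St m → St n) (x₀ : St n) (π : ℕ → St m) : ℕ → St n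
  | 0 => x₀
  | k + 1 => f (traj f x₀ π k) (π k)

/-- A perturbation input policy takes values in `D`. -/
def IsPolicy {m : ℕ} (D : Set (St m)) (π : ℕ → St m) : Prop := ∀ k, π k ∈ D

/-- Maximal robust region of attraction. -/
def RoA {n m : ℕ} (f : St n → St m → St n) (D : Set (St m)) (X : Set (St n)) : Set (St n) :=
  {x₀ | ∀ π, IsPolicy D π →
    (∀ k, traj f x₀ π k ∈ X) ∧ Tendsto (fun k => traj f x₀ π k) atTop (nhds 0)}

/-- `f` is a polynomial map in `(x, d)`. -/
def IsPolyMap2 {n m : ℕ} (f : St n → St m → St n) : Prop :=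
  ∃ p : Fin n → MvPolynomial (Fin n ⊕ Fin m) ℝ,
    ∀ x d i, f x d i = MvPolynomial.eval (Sum.elim x d) (p i)

/-- A real-valued polynomial function on the state space. -/
def IsPolyFun {n : ℕ} (g : St n → ℝ) : Prop :=
  ∃ p : MvPolynomial (Fin n) ℝ, ∀ x, g x = MvPolynomial.eval x p

/-- Assumption 1: uniform local exponential stability. -/
def Assumption1 {n m : ℕ} (f : St n → St m → St n) (D : Set (St m)) (X : Set (St n)) : Prop :=
  ∃ M r lam : ℝ, 0 < M ∧ 0 < r ∧ 0 < lam ∧ lam < 1 ∧ closedBall (0 : St n) r ⊆ X ∧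
    ∀ x₀ ∈ closedBall (0 : St n) r, ∀ π, IsPolicy D π →
      ∀ k, ‖traj f x₀ π k‖ ≤ lam ^ k * M * ‖x₀‖

/-- Maximal robust region of uniform attraction (with ball radius `ε`). -/
def R0 {n m : ℕ} (f : St n → St m → St n) (D : Set (St m)) (X : Set (St n)) (ε : ℝ) :
    Set (St n) :=
  {x₀ | (∃ δ > 0, ∀ π, IsPolicy D π → ∀ k, δ < infDist (traj f x₀ π k) Xᶜ) ∧
        (∃ K : ℕ, ∀ π, IsPolicy D π →
            ∃ k, 0 < k ∧ k ≤ K ∧ traj f x₀ π k ∈ closedBall (0 : St n) ε)}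

/-- Extended-real logarithm with the convention `ln 0 = -∞`. -/
def elog (t : ℝ) : EReal := if t = 0 then ⊥ else (Real.log t : EReal)

/-- The value function `V`. -/
def Vval {n m nX : ℕ} (f : St n → St m → St n) (D : Set (St m))
    (hX : Fin nX → St n → ℝ) (g : St n → ℝ) (x : St n) : EReal :=
  ⨆ π ∈ {π : ℕ → St m | IsPolicy D π}, ⨆ k : ℕ,
    ((∑ i ∈ Finset.range k, Real.log (g (traj f x π i) + 1) : ℝ) : EReal)
      - ⨅ j : Fin nX, elog (max (1 - hX j (traj f x π k)) 0)

/-- The Kruzhkov transformed value function `v = 1 - e^{-V}` (with `e^{-∞} = 0`). -/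
def vval {n m nX : ℕ} (f : St n → St m → St n) (D : Set (St m))
    (hX : Fin nX → St n → ℝ) (g : St n → ℝ) (x : St n) : ℝ :=
  if Vval f D hX g x = ⊤ then 1 else 1 - Real.exp (-(Vval f D hX g x).toReal)

/-- `w` is a (bounded continuous) solution of the Bellman equation. -/
def IsBellmanSolution {n m nX : ℕ} (f : St n → St m → St n) (D : Set (St m))
    (hX : Fin nX → St n → ℝ) (g : St n → ℝ) (w : St n → ℝ) : Prop :=
  (∀ x, min (sInf {y : ℝ | ∃ d ∈ D, y = w x - w (f x d) - g x * (1 - w x)})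
            (w x - 1 + ⨅ j : Fin nX, max (1 - hX j x) 0) = 0) ∧ w 0 = 0

theorem stmt2
    {n m nX : ℕ} (hnX : 0 < nX)
    (f : St n → St m → St n) (hfpoly : IsPolyMap2 f)
    (D : Set (St m)) (hD : IsCompact D)
    (hf0 : ∀ d ∈ D, f 0 d = 0)
    (hX : Fin nX → St n → ℝ) (hXpoly : ∀ j, IsPolyFun (hX j))
    (hX0 : ∀ j, hX j 0 = 0) (hXpos : ∀ j, ∀ x : St n, x ≠ 0 → 0 < hX j x)
    (X : Set (St n)) (hXdef : X = {x | ∀ j, hX j x < 1})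
    (hXbdd : Bornology.IsBounded X) (hXopen : IsOpen X)
    (g : St n → ℝ) (hgpoly : IsPolyFun g) (hgnn : ∀ x, 0 ≤ g x)
    (hgzero : ∀ x : St n, g x = 0 ↔ x = 0)
    (R : ℝ) (hR : 0 < R)
    (hOmegaX : {y | ∃ x₀ ∈ X, ∃ d ∈ D, y = f x₀ d} ∪ X ⊆ {x : St n | ‖x‖ ^ 2 ≤ R})
    (hinf : St n → ℝ) (hinfpoly : IsPolyFun hinf)
    (Xinf : Set (St n)) (hXinfdef : Xinf = {x | hinf x < 1})
    (hXinfRoA : Xinf ⊆ RoA f D X) (hXinf0 : (0 : St n) ∈ interior Xinf)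
    (u : St n → ℝ) (hucont : Continuous u)
    (hu1 : ∀ x ∈ closure ({x : St n | ‖x‖ ^ 2 ≤ R} \ Xinf), ∀ d ∈ D,
      0 ≤ u x - u (f x d) - g x * (1 - u x))
    (hu2 : ∀ x ∈ {x : St n | ‖x‖ ^ 2 ≤ R} \ X, 0 ≤ u x - 1)
    (hu3 : ∀ x ∈ closure X, ∀ j, 0 ≤ u x - hX j x)
    :
    {x : St n | ‖x‖ ^ 2 ≤ R ∧ u x < 1} ⊆ RoA f D X := by
  classical
  intro x₀ hx₀
  obtain ⟨hx₀B, hx₀u⟩ := hx₀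
  intro π hπ
  -- continuity of g
  obtain ⟨pg, hpg⟩ := hgpoly
  have hgcont : Continuous g := by
    have hgeq : g = fun x : St n => MvPolynomial.eval x pg := funext hpg
    rw [hgeq]; exact (MvPolynomial.continuous_eval pg).comp (PiLp.continuous_ofLp 2 _)
  set T : ℕ → St n := traj f x₀ π with hT
  set B : Set (St n) := {x : St n | ‖x‖ ^ 2 ≤ R} with hBdef
  have hBbdd : Bornology.IsBounded B := by
    apply Bornology.IsBounded.subset (isBounded_closedBall (x := (0 : St n)) (r := Real.sqrt R))
    intro x hx
    have hx' : ‖x‖ ^ 2 ≤ R := hx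
    simp only [mem_closedBall, dist_zero_right]
    nlinarith [Real.sq_sqrt hR.le, Real.sqrt_nonneg R, norm_nonneg x]
  set K : Set (St n) := closure (B \ Xinf) with hKdef
  have hKcompact : IsCompact K :=
    Metric.isCompact_of_isClosed_isBounded isClosed_closure
      ((hBbdd.subset diff_subset).closure)
  have h0K : (0 : St n) ∉ K := by
    obtain ⟨ε, hε, hball⟩ := Metric.mem_nhds_iff.mp (mem_interior_iff_mem_nhds.mp hXinf0)
    have hsub : B \ Xinf ⊆ (Metric.ball (0 : St n) ε)ᶜ := by
      intro x hx hxball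
      exact hx.2 (hball hxball)
    have : K ⊆ (Metric.ball (0 : St n) ε)ᶜ :=
      closure_minimal hsub (Metric.isOpen_ball.isClosed_compl)
    intro h0
    exact (this h0) (Metric.mem_ball_self hε)
  have memX : ∀ x : St n, ‖x‖ ^ 2 ≤ R → u x < 1 → x ∈ X := by
    intro x hxB hxu
    by_contra hxX
    have := hu2 x ⟨hxB, hxX⟩
    linarith
  -- invariant while outside Xinf
  have inv : ∀ k, (∀ i < k, T i ∉ Xinf) → ‖T k‖ ^ 2 ≤ R ∧ u (T k) ≤ u x₀ := by
    intro k
    induction k with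
    | zero => intro _; exact ⟨hx₀B, le_refl _⟩
    | succ k ih =>
      intro hnot
      obtain ⟨hkB, hku⟩ := ih fun i hi => hnot i (hi.trans (Nat.lt_succ_self k))
      have hku1 : u (T k) < 1 := lt_of_le_of_lt hku hx₀u
      have hkX : T k ∈ X := memX _ hkB hku1
      have hkXinf : T k ∉ Xinf := hnot k (Nat.lt_succ_self k)
      have hTk1 : T (k + 1) = f (T k) (π k) := rfl
      have h1 := hu1 (T k) (subset_closure ⟨hkB, hkXinf⟩) (π k) (hπ k)
      constructor
      · rw [hTk1]
        exact hOmegaX (Or.inl ⟨T k, hkX, π k, hπ k, rfl⟩)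
      · rw [hTk1]
        nlinarith [hgnn (T k)]
  -- the trajectory must enter Xinf
  have hexists : ∃ k, T k ∈ Xinf := by
    by_contra hno
    push_neg at hno
    have hall : ∀ k, ‖T k‖ ^ 2 ≤ R ∧ u (T k) ≤ u x₀ := fun k => inv k fun i _ => hno i
    have hKmem : ∀ k, T k ∈ K := fun k => subset_closure ⟨(hall k).1, hno k⟩
    obtain ⟨z, hzK, hz⟩ := hKcompact.exists_isMinOn ⟨T 0, hKmem 0⟩ hgcont.continuousOn
    have hz0 : z ≠ 0 := fun h => h0K (h ▸ hzK)
    have hδ : 0 < g z := lt_of_le_of_ne (hgnn z) fun h => hz0 ((hgzero z).mp h.symm)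
    obtain ⟨w, hwK, hw⟩ := hKcompact.exists_isMinOn ⟨T 0, hKmem 0⟩ hucont.continuousOn
    have hεpos : (0 : ℝ) < 1 - u x₀ := by linarith
    have hdec : ∀ k : ℕ, u (T k) ≤ u x₀ - k * (g z * (1 - u x₀)) := by
      intro k
      induction k with
      | zero =>
        simp only [Nat.cast_zero, zero_mul, sub_zero]
        exact le_of_eq rfl
      | succ k ih =>
        have h1 := hu1 (T k) (hKmem k) (π k) (hπ k)
        have hgk : g z ≤ g (T k) := isMinOn_iff.mp hz _ (hKmem k)
        have hek : 1 - u x₀ ≤ 1 - u (T k) := by have := (hall k).2; linarith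
        have hmul : g z * (1 - u x₀) ≤ g (T k) * (1 - u (T k)) :=
          mul_le_mul hgk hek hεpos.le (hgnn _)
        have hTk1 : T (k + 1) = f (T k) (π k) := rfl
        rw [hTk1]
        push_cast
        linarith
    obtain ⟨N, hN⟩ := exists_nat_gt ((u x₀ - u w) / (g z * (1 - u x₀)))
    have hdN := hdec N
    have huw : u w ≤ u (T N) := isMinOn_iff.mp hw _ (hKmem N)
    have hpos : 0 < g z * (1 - u x₀) := mul_pos hδ hεpos
    have hN' : u x₀ - u w < N * (g z * (1 - u x₀)) := (div_lt_iff₀ hpos).mp hN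
    linarith
  set k₀ := Nat.find hexists with hk₀def
  have hk₀ : T k₀ ∈ Xinf := Nat.find_spec hexists
  have hk₀min : ∀ i < k₀, T i ∉ Xinf := fun i hi => Nat.find_min hexists hi
  have hshift : ∀ i, traj f (T k₀) (fun j => π (k₀ + j)) i = T (k₀ + i) := by
    intro i
    induction i with
    | zero => rfl
    | succ i ih =>
      have h1 : k₀ + (i + 1) = (k₀ + i) + 1 := by omega
      rw [h1]
      show f (traj f (T k₀) (fun j => π (k₀ + j)) i) (π (k₀ + i)) = f (T (k₀ + i)) (π (k₀ + i))
      rw [ih]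
  have hπ' : IsPolicy D fun j => π (k₀ + j) := fun j => hπ _
  obtain ⟨hXall, hTend⟩ := hXinfRoA hk₀ _ hπ'
  constructor
  · intro k
    rcases lt_or_ge k k₀ with h | h
    · obtain ⟨hkB, hku⟩ := inv k fun i hi => hk₀min i (hi.trans h)
      exact memX _ hkB (lt_of_le_of_lt hku hx₀u)
    · obtain ⟨i, rfl⟩ := Nat.exists_eq_add_of_le h
      rw [show T (k₀ + i) = traj f (T k₀) (fun j => π (k₀ + j)) i from (hshift i).symm]
      exact hXall i
  · have htail : Tendsto (fun i => T (i + k₀)) atTop (nhds 0) := by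
      have heq : (fun i => T (i + k₀)) = fun i => traj f (T k₀) (fun j => π (k₀ + j)) i := by
        funext i
        rw [hshift i, Nat.add_comm]
      rw [heq]
      exact hTend
    exact (tendsto_add_atTop_iff_nat k₀).mp htail
end
end

section
/- Under Assumption 2, if a continuous function u : ℝⁿ → ℝ satisfies the relaxed constraints, then for every x₀ ∈ B(0, R) with u(x₀) < 1 and every perturbation input policy π, the trajectory satisfies φ_{x₀}^π(k) ∈ X for all k ∈ ℕ. -/
open Metric Set Filter MeasureTheory

noncomputable section

theorem stmt3
    {n m nX : ℕ} (hnX : 0 < nX)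
    (f : St n → St m → St n) (hfpoly : IsPolyMap2 f)
    (D : Set (St m)) (hD : IsCompact D)
    (hf0 : ∀ d ∈ D, f 0 d = 0)
    (hX : Fin nX → St n → ℝ) (hXpoly : ∀ j, IsPolyFun (hX j))
    (hX0 : ∀ j, hX j 0 = 0) (hXpos : ∀ j, ∀ x : St n, x ≠ 0 → 0 < hX j x)
    (X : Set (St n)) (hXdef : X = {x | ∀ j, hX j x < 1})
    (hXbdd : Bornology.IsBounded X) (hXopen : IsOpen X)
    (g : St n → ℝ) (hgpoly : IsPolyFun g) (hgnn : ∀ x, 0 ≤ g x)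
    (hgzero : ∀ x : St n, g x = 0 ↔ x = 0)
    (R : ℝ) (hR : 0 < R)
    (hOmegaX : {y | ∃ x₀ ∈ X, ∃ d ∈ D, y = f x₀ d} ∪ X ⊆ {x : St n | ‖x‖ ^ 2 ≤ R})
    (hinf : St n → ℝ) (hinfpoly : IsPolyFun hinf)
    (Xinf : Set (St n)) (hXinfdef : Xinf = {x | hinf x < 1})
    (hXinfRoA : Xinf ⊆ RoA f D X) (hXinf0 : (0 : St n) ∈ interior Xinf)
    (u : St n → ℝ) (hucont : Continuous u)
    (hu1 : ∀ x ∈ closure ({x : St n | ‖x‖ ^ 2 ≤ R} \ Xinf), ∀ d ∈ D,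
      0 ≤ u x - u (f x d) - g x * (1 - u x))
    (hu2 : ∀ x ∈ {x : St n | ‖x‖ ^ 2 ≤ R} \ X, 0 ≤ u x - 1)
    (hu3 : ∀ x ∈ closure X, ∀ j, 0 ≤ u x - hX j x)
    :
    ∀ x₀ : St n, ‖x₀‖ ^ 2 ≤ R → u x₀ < 1 → ∀ π, IsPolicy D π →
      ∀ k, traj f x₀ π k ∈ X := by
  intro x₀ hx₀R hx₀u π hπ
  classical
  have key : ∀ k, (∀ i < k, traj f x₀ π i ∉ Xinf) →
      ‖traj f x₀ π k‖ ^ 2 ≤ R ∧ u (traj f x₀ π k) < 1 := by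
    intro k
    induction k with
    | zero => intro _; exact ⟨hx₀R, hx₀u⟩
    | succ k ih =>
      intro hni
      obtain ⟨hB, hu⟩ := ih (fun i hi => hni i (Nat.lt_succ_of_lt hi))
      have hXk : traj f x₀ π k ∈ X := by
        by_contra hc
        have := hu2 (traj f x₀ π k) ⟨hB, hc⟩
        linarith
      have hmem : traj f x₀ π k ∈ closure ({x : St n | ‖x‖ ^ 2 ≤ R} \ Xinf) :=
        subset_closure ⟨hB, hni k (Nat.lt_succ_self k)⟩
      have h1 := hu1 _ hmem (π k) (hπ k)
      have hg := hgnn (traj f x₀ π k)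
      have hnext : traj f x₀ π (k + 1) = f (traj f x₀ π k) (π k) := rfl
      have hmul : 0 ≤ g (traj f x₀ π k) * (1 - u (traj f x₀ π k)) :=
        mul_nonneg hg (by linarith)
      refine ⟨?_, ?_⟩
      · exact hOmegaX (Or.inl ⟨_, hXk, π k, hπ k, hnext⟩)
      · rw [hnext]; linarith
  intro k
  by_cases hcase : ∃ i ≤ k, traj f x₀ π i ∈ Xinf
  · obtain ⟨i, hik, hi⟩ := hcase
    have hex : ∃ i, traj f x₀ π i ∈ Xinf := ⟨i, hi⟩
    have hi₀mem := Nat.find_spec hex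
    have hi₀le : Nat.find hex ≤ k := le_trans (Nat.find_min' hex hi) hik
    have hshift : ∀ j, traj f x₀ π (Nat.find hex + j) =
        traj f (traj f x₀ π (Nat.find hex)) (fun l => π (Nat.find hex + l)) j := by
      intro j
      induction j with
      | zero => rfl
      | succ j ih => simp only [Nat.add_succ, traj, Nat.add_eq, ih]
    have hroa := (hXinfRoA hi₀mem (fun l => π (Nat.find hex + l)) (fun l => hπ _)).1
        (k - Nat.find hex)
    rw [← hshift] at hroa
    rwa [Nat.add_sub_cancel' hi₀le] at hroa
  · push_neg at hcase
    obtain ⟨hB, hu⟩ := key k (fun i hi => hcase i (le_of_lt hi))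
    by_contra hc
    have := hu2 (traj f x₀ π k) ⟨hB, hc⟩
    linarith
end
end

section
/- Under Assumption 2, if a continuous function u : ℝⁿ → ℝ satisfies the relaxed constraints, then for every x₀ ∈ B(0, R) with u(x₀) < 1 and every perturbation input policy π, there exists k ∈ ℕ such that φ_{x₀}^π(k) ∈ X∞; i.e., every trajectory starting in {x ∈ B(0, R) : u(x) < 1} enters the set X∞ in finite time. -/
open Metric Set Filter MeasureTheory

noncomputable section

theorem stmt4
    {n m nX : ℕ} (hnX : 0 < nX)
    (f : St n → St m → St n) (hfpoly : IsPolyMap2 f)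
    (D : Set (St m)) (hD : IsCompact D)
    (hf0 : ∀ d ∈ D, f 0 d = 0)
    (hX : Fin nX → St n → ℝ) (hXpoly : ∀ j, IsPolyFun (hX j))
    (hX0 : ∀ j, hX j 0 = 0) (hXpos : ∀ j, ∀ x : St n, x ≠ 0 → 0 < hX j x)
    (X : Set (St n)) (hXdef : X = {x | ∀ j, hX j x < 1})
    (hXbdd : Bornology.IsBounded X) (hXopen : IsOpen X)
    (g : St n → ℝ) (hgpoly : IsPolyFun g) (hgnn : ∀ x, 0 ≤ g x)
    (hgzero : ∀ x : St n, g x = 0 ↔ x = 0)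
    (R : ℝ) (hR : 0 < R)
    (hOmegaX : {y | ∃ x₀ ∈ X, ∃ d ∈ D, y = f x₀ d} ∪ X ⊆ {x : St n | ‖x‖ ^ 2 ≤ R})
    (hinf : St n → ℝ) (hinfpoly : IsPolyFun hinf)
    (Xinf : Set (St n)) (hXinfdef : Xinf = {x | hinf x < 1})
    (hXinfRoA : Xinf ⊆ RoA f D X) (hXinf0 : (0 : St n) ∈ interior Xinf)
    (u : St n → ℝ) (hucont : Continuous u)
    (hu1 : ∀ x ∈ closure ({x : St n | ‖x‖ ^ 2 ≤ R} \ Xinf), ∀ d ∈ D,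
      0 ≤ u x - u (f x d) - g x * (1 - u x))
    (hu2 : ∀ x ∈ {x : St n | ‖x‖ ^ 2 ≤ R} \ X, 0 ≤ u x - 1)
    (hu3 : ∀ x ∈ closure X, ∀ j, 0 ≤ u x - hX j x)
    :
    ∀ x₀ : St n, ‖x₀‖ ^ 2 ≤ R → u x₀ < 1 → ∀ π, IsPolicy D π →
      ∃ k, traj f x₀ π k ∈ Xinf := by
  intro x₀ hx₀B hx₀u π hπ
  by_contra hcon
  push_neg at hcon
  -- continuity facts
  obtain ⟨pg, hpg⟩ := hgpoly
  have hgcont : Continuous g := by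
    have : g = fun x : St n => MvPolynomial.eval x pg := funext hpg
    rw [this]
    exact (MvPolynomial.continuous_eval pg).comp (PiLp.continuous_ofLp 2 (fun _ : Fin n => ℝ))
  obtain ⟨ph, hph⟩ := hinfpoly
  have hinfcont : Continuous hinf := by
    have : hinf = fun x : St n => MvPolynomial.eval x ph := funext hph
    rw [this]
    exact (MvPolynomial.continuous_eval ph).comp (PiLp.continuous_ofLp 2 (fun _ : Fin n => ℝ))
  have hXinfopen : IsOpen Xinf := by
    rw [hXinfdef]; exact isOpen_lt hinfcont continuous_const
  set B : Set (St n) := {x : St n | ‖x‖ ^ 2 ≤ R} with hBdef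
  -- membership helper
  have hmemX : ∀ x : St n, x ∈ B → u x < 1 → x ∈ X := by
    intro x hxB hxu
    by_contra hxX
    have := hu2 x ⟨hxB, hxX⟩
    linarith
  have hx₀X : x₀ ∈ X := hmemX x₀ hx₀B hx₀u
  -- compact set K
  set K : Set (St n) := closure X ∩ Xinfᶜ with hKdef
  have hKclosed : IsClosed K := isClosed_closure.inter hXinfopen.isClosed_compl
  have hKbdd : Bornology.IsBounded K := hXbdd.closure.subset inter_subset_left
  have hKcompact : IsCompact K := Metric.isCompact_of_isClosed_isBounded hKclosed hKbdd
  have hKne : K.Nonempty := ⟨x₀, subset_closure hx₀X, hcon 0⟩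
  obtain ⟨z, hzK, hzmin⟩ := hKcompact.exists_isMinOn hKne hgcont.continuousOn
  have hzne : z ≠ 0 := by
    intro h
    exact hzK.2 (h ▸ interior_subset hXinf0)
  have hε : 0 < g z := lt_of_le_of_ne (hgnn z) (fun h => hzne ((hgzero z).mp h.symm))
  set ε : ℝ := g z with hεdef
  set c : ℝ := ε * (1 - u x₀) with hcdef
  have hc : 0 < c := mul_pos hε (by linarith)
  have hXnn : ∀ j x, (0 : ℝ) ≤ hX j x := by
    intro j x
    rcases eq_or_ne x 0 with h | h
    · simp [h, hX0]
    · exact (hXpos j x h).le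
  -- main induction
  have main : ∀ k, traj f x₀ π k ∈ B ∧ u (traj f x₀ π k) ≤ u x₀ - k * c := by
    intro k
    induction k with
    | zero => exact ⟨hx₀B, by simp [traj]⟩
    | succ k ih =>
      obtain ⟨hB, hu⟩ := ih
      set x := traj f x₀ π k with hxdef
      have hkc : (0 : ℝ) ≤ k * c := by positivity
      have hux1 : u x < 1 := by linarith
      have hxX : x ∈ X := hmemX x hB hux1
      have hxK : x ∈ K := ⟨subset_closure hxX, hcon k⟩
      have hgx : ε ≤ g x := hzmin hxK
      have hxcl : x ∈ closure (B \ Xinf) := subset_closure ⟨hB, hcon k⟩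
      have hstep := hu1 x hxcl (π k) (hπ k)
      have hmul : ε * (1 - u x₀) ≤ g x * (1 - u x) :=
        mul_le_mul hgx (by linarith) (by linarith) (hgnn x)
      have htr : traj f x₀ π (k + 1) = f x (π k) := rfl
      constructor
      · rw [htr]
        exact hOmegaX (Or.inl ⟨x, hxX, π k, hπ k, rfl⟩)
      · rw [htr]
        push_cast
        have : u (f x (π k)) ≤ u x - c := by
          simp only [hcdef] at hmul ⊢
          linarith
        linarith
  -- contradiction via nonnegativity of u on X
  obtain ⟨N, hN⟩ := exists_nat_gt (u x₀ / c)
  obtain ⟨hB, huN⟩ := main N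
  have hNX : traj f x₀ π N ∈ X := by
    have hkc : (0 : ℝ) ≤ N * c := by positivity
    exact hmemX _ hB (by linarith)
  have h0 : (0 : ℝ) ≤ u (traj f x₀ π N) := by
    have := hu3 _ (subset_closure hNX) ⟨0, hnX⟩
    have := hXnn ⟨0, hnX⟩ (traj f x₀ π N)
    linarith
  have : u x₀ / c < N := hN
  have hNc : u x₀ < N * c := by
    rw [div_lt_iff₀ hc] at this
    linarith
  linarith
end
end

section
/- Under Assumption 1, R₀ = R₀', where R₀' = {x₀ ∈ ℝⁿ : there exists δ > 0 such that dist(φ_{x₀}^π(k), Xᶜ) > δ for all k ∈ ℕ and all policies π, and there exists a function β : ℕ → [0, ∞) with β(k) → 0 as k → ∞ such that ‖φ_{x₀}^π(k)‖ ≤ β(k) for all k ∈ ℕ and all policies π}. -/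
open Metric Set Filter MeasureTheory

noncomputable section

lemma traj_shift {n m : ℕ} (f : St n → St m → St n) (x₀ : St n) (π : ℕ → St m) (k₀ : ℕ) :
    ∀ j, traj f x₀ π (k₀ + j) = traj f (traj f x₀ π k₀) (fun i => π (k₀ + i)) j := by
  intro j
  induction j with
  | zero => rfl
  | succ j ih => show traj f x₀ π ((k₀ + j) + 1) = _; simp [traj, ih]

theorem stmt7
    {n m nX : ℕ} (hnX : 0 < nX)
    (f : St n → St m → St n) (hfpoly : IsPolyMap2 f)
    (D : Set (St m)) (hD : IsCompact D)
    (hf0 : ∀ d ∈ D, f 0 d = 0)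
    (hX : Fin nX → St n → ℝ) (hXpoly : ∀ j, IsPolyFun (hX j))
    (hX0 : ∀ j, hX j 0 = 0) (hXpos : ∀ j, ∀ x : St n, x ≠ 0 → 0 < hX j x)
    (X : Set (St n)) (hXdef : X = {x | ∀ j, hX j x < 1})
    (hXbdd : Bornology.IsBounded X) (hXopen : IsOpen X)
    (M r lam : ℝ) (hM : 0 < M) (hr : 0 < r) (hlam0 : 0 < lam) (hlam1 : lam < 1)
    (hball : closedBall (0 : St n) r ⊆ X)
    (hstab : ∀ x₀ ∈ closedBall (0 : St n) r, ∀ π, IsPolicy D π →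
      ∀ k, ‖traj f x₀ π k‖ ≤ lam ^ k * M * ‖x₀‖)
    :
    R0 f D X (min (r / (2 * M)) (r / 2)) =
      {x₀ | (∃ δ > 0, ∀ π, IsPolicy D π → ∀ k, δ < infDist (traj f x₀ π k) Xᶜ) ∧
            ∃ β : ℕ → ℝ, (∀ k, 0 ≤ β k) ∧ Tendsto β atTop (nhds 0) ∧
              ∀ π, IsPolicy D π → ∀ k, ‖traj f x₀ π k‖ ≤ β k} := by
  set ε := min (r / (2 * M)) (r / 2) with hεdef
  have hε0 : 0 < ε := lt_min (by positivity) (by positivity)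
  have hεr : ε ≤ r / 2 := min_le_right _ _
  ext x₀
  simp only [R0, Set.mem_setOf_eq]
  constructor
  · rintro ⟨hδ, K, hK⟩
    refine ⟨hδ, ?_⟩
    obtain ⟨C, hC⟩ := hXbdd.subset_closedBall 0
    set C' := max C 0 with hC'def
    -- trajectories stay in X
    have hmemX : ∀ π, IsPolicy D π → ∀ k, traj f x₀ π k ∈ X := by
      intro π hπ k
      obtain ⟨δ, hδ0, hδall⟩ := hδ
      by_contra hout
      have := hδall π hπ k
      rw [infDist_zero_of_mem (Set.mem_compl hout)] at this
      linarith
    refine ⟨fun k => if k ≤ K then C' else lam ^ (k - K) * M * ε, ?_, ?_, ?_⟩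
    · intro k
      by_cases hk : k ≤ K <;> simp [hk, hC'def]
      · positivity
    · have h1 : Tendsto (fun k : ℕ => lam ^ (k - K) * M * ε) atTop (nhds 0) := by
        have h2 : Tendsto (fun j : ℕ => lam ^ j) atTop (nhds 0) :=
          tendsto_pow_atTop_nhds_zero_of_lt_one hlam0.le hlam1
        have h3 : Tendsto (fun k : ℕ => lam ^ (k - K)) atTop (nhds 0) :=
          h2.comp (tendsto_sub_atTop_nat K)
        have := (h3.mul_const M).mul_const ε
        simpa using this
      refine h1.congr' ?_
      filter_upwards [eventually_gt_atTop K] with k hk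
      simp [Nat.not_le.mpr hk]
    · intro π hπ k
      by_cases hk : k ≤ K
      · simp only [if_pos hk]
        have := hC (hmemX π hπ k)
        rw [mem_closedBall, dist_zero_right] at this
        exact this.trans (le_max_left _ _)
      · simp only [if_neg hk]
        obtain ⟨k₀, hk₀0, hk₀K, hk₀mem⟩ := hK π hπ
        rw [mem_closedBall, dist_zero_right] at hk₀mem
        have hk₀r : traj f x₀ π k₀ ∈ closedBall (0 : St n) r := by
          rw [mem_closedBall, dist_zero_right]
          exact hk₀mem.trans (hεr.trans (by linarith))
        have hk₀k : k₀ ≤ k := hk₀K.trans (Nat.not_le.mp hk).le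
        have hπ' : IsPolicy D (fun i => π (k₀ + i)) := fun i => hπ _
        have hb := hstab _ hk₀r _ hπ' (k - k₀)
        rw [← traj_shift, Nat.add_sub_cancel' hk₀k] at hb
        have h2 : lam ^ (k - k₀) * M * ‖traj f x₀ π k₀‖ ≤ lam ^ (k - K) * M * ε := by
          have hpow : lam ^ (k - k₀) ≤ lam ^ (k - K) :=
            pow_le_pow_of_le_one hlam0.le hlam1.le (Nat.sub_le_sub_left hk₀K k)
          have := mul_le_mul hpow hk₀mem (norm_nonneg _) (by positivity)
          calc lam ^ (k - k₀) * M * ‖traj f x₀ π k₀‖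
              = lam ^ (k - k₀) * ‖traj f x₀ π k₀‖ * M := by ring
            _ ≤ lam ^ (k - K) * ε * M := by
                exact mul_le_mul_of_nonneg_right this hM.le
            _ = lam ^ (k - K) * M * ε := by ring
        exact hb.trans h2
  · rintro ⟨hδ, β, hβ0, hβtend, hβ⟩
    refine ⟨hδ, ?_⟩
    have := hβtend.eventually (gt_mem_nhds hε0)
    obtain ⟨N, hN⟩ := eventually_atTop.mp this
    refine ⟨N + 1, fun π hπ => ⟨N + 1, Nat.succ_pos _, le_refl _, ?_⟩⟩
    rw [mem_closedBall, dist_zero_right]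
    exact (hβ π hπ (N + 1)).trans (hN (N + 1) (Nat.le_succ _)).le
end
end

section
/- Under Assumption 1, the maximal robust region of uniform attraction R₀ is an open subset of ℝⁿ. -/
open Metric Set Filter MeasureTheory

noncomputable section

lemma traj_add' {n m : ℕ} (f : St n → St m → St n) (x : St n) (π : ℕ → St m) (a b : ℕ) :
    traj f x π (a + b) = traj f (traj f x π a) (fun j => π (a + j)) b := by
  induction b with
  | zero => rfl
  | succ b ih =>
    have h : a + (b + 1) = (a + b) + 1 := by omega
    rw [h]
    show f (traj f x π (a + b)) (π (a + b))
        = f (traj f (traj f x π a) (fun j => π (a + j)) b) (π (a + b))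
    rw [ih]

theorem stmt8
    {n m nX : ℕ} (hnX : 0 < nX)
    (f : St n → St m → St n) (hfpoly : IsPolyMap2 f)
    (D : Set (St m)) (hD : IsCompact D)
    (hf0 : ∀ d ∈ D, f 0 d = 0)
    (hX : Fin nX → St n → ℝ) (hXpoly : ∀ j, IsPolyFun (hX j))
    (hX0 : ∀ j, hX j 0 = 0) (hXpos : ∀ j, ∀ x : St n, x ≠ 0 → 0 < hX j x)
    (X : Set (St n)) (hXdef : X = {x | ∀ j, hX j x < 1})
    (hXbdd : Bornology.IsBounded X) (hXopen : IsOpen X)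
    (M r lam : ℝ) (hM : 0 < M) (hr : 0 < r) (hlam0 : 0 < lam) (hlam1 : lam < 1)
    (hball : closedBall (0 : St n) r ⊆ X)
    (hstab : ∀ x₀ ∈ closedBall (0 : St n) r, ∀ π, IsPolicy D π →
      ∀ k, ‖traj f x₀ π k‖ ≤ lam ^ k * M * ‖x₀‖)
    :
    IsOpen (R0 f D X (min (r / (2 * M)) (r / 2))) := by
  -- continuity of f
  obtain ⟨p, hp⟩ := hfpoly
  have hcont : Continuous (fun q : St n × St m => f q.1 q.2) := by
    have hsum : Continuous (fun q : St n × St m => (Sum.elim q.1 q.2 : Fin n ⊕ Fin m → ℝ)) := by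
      apply continuous_pi
      rintro (i | j)
      · exact (continuous_apply i).comp
          ((EuclideanSpace.equiv (Fin n) ℝ).continuous.comp continuous_fst)
      · exact (continuous_apply j).comp
          ((EuclideanSpace.equiv (Fin m) ℝ).continuous.comp continuous_snd)
    have h1 : Continuous (fun q : St n × St m =>
        (EuclideanSpace.equiv (Fin n) ℝ).symm
          (fun i => MvPolynomial.eval (Sum.elim q.1 q.2) (p i))) := by
      apply (EuclideanSpace.equiv (Fin n) ℝ).symm.continuous.comp
      exact continuous_pi fun i => (MvPolynomial.continuous_eval (p i)).comp hsum
    convert h1 using 2 with q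
    ext i
    exact hp q.1 q.2 i
  obtain ⟨R, hR⟩ := hXbdd.subset_closedBall (0 : St n)
  have hUC : UniformContinuousOn (fun q : St n × St m => f q.1 q.2)
      (closedBall (0 : St n) (R + 1) ×ˢ D) :=
    ((isCompact_closedBall (0 : St n) (R + 1)).prod hD).uniformContinuousOn_of_continuous
      hcont.continuousOn
  have hUC' := Metric.uniformContinuousOn_iff_le.mp hUC
  rw [Metric.isOpen_iff]
  rintro x₀ ⟨⟨δ, hδpos, hδ⟩, K, hK⟩
  set ε : ℝ := min (r / (2 * M)) (r / 2) with hεdef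
  have hε : 0 < ε := lt_min (by positivity) (by positivity)
  have hεr2 : ε ≤ r / 2 := min_le_right _ _
  have hMε : M * ε ≤ r / 2 := by
    have h1 : ε ≤ r / (2 * M) := min_le_left _ _
    have h2 : M * ε ≤ M * (r / (2 * M)) := by nlinarith
    have h3 : M * (r / (2 * M)) = r / 2 := by field_simp
    linarith
  set γ : ℝ := min (δ / 2) (min (r / (4 * M)) (r / 4)) with hγdef
  have hγ : 0 < γ := lt_min (by positivity) (lt_min (by positivity) (by positivity))
  have hγδ : γ ≤ δ / 2 := min_le_left _ _
  have hγr : γ ≤ r / 4 := le_trans (min_le_right _ _) (min_le_right _ _)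
  have hMγ : M * γ ≤ r / 4 := by
    have h1 : γ ≤ r / (4 * M) := le_trans (min_le_right _ _) (min_le_left _ _)
    have h2 : M * γ ≤ M * (r / (4 * M)) := by nlinarith
    have h3 : M * (r / (4 * M)) = r / 4 := by field_simp
    linarith
  have hεγr : ε + γ ≤ r := by linarith
  have hMεγ : M * (ε + γ) ≤ 3 * r / 4 := by nlinarith
  -- membership of x₀ trajectories in X
  have hmemX : ∀ π, IsPolicy D π → ∀ k, traj f x₀ π k ∈ X := by
    intro π hπ k
    by_contra h
    have h2 := hδ π hπ k
    have hc : traj f x₀ π k ∈ Xᶜ := h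
    rw [Metric.infDist_zero_of_mem hc] at h2
    linarith
  -- uniform approximation lemma
  have happrox : ∀ K' : ℕ, ∀ γ' > (0 : ℝ), ∃ η > (0 : ℝ), ∀ y₀ : St n, dist y₀ x₀ ≤ η →
      ∀ π, IsPolicy D π → ∀ k ≤ K', dist (traj f y₀ π k) (traj f x₀ π k) ≤ γ' := by
    intro K'
    induction K' with
    | zero =>
      intro γ' hγ'
      refine ⟨γ', hγ', fun y₀ hy π hπ k hk => ?_⟩
      interval_cases k
      exact hy
    | succ K' ih =>
      intro γ' hγ'
      obtain ⟨ρ, hρ, hρle⟩ := hUC' γ' hγ'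
      obtain ⟨η, hη, hηle⟩ := ih (min ρ (min γ' 1))
        (lt_min hρ (lt_min hγ' one_pos))
      refine ⟨η, hη, fun y₀ hy π hπ k hk => ?_⟩
      rcases Nat.lt_or_ge k (K' + 1) with h | h
      · exact le_trans (hηle y₀ hy π hπ k (by omega))
          (le_trans (min_le_right _ _) (min_le_left _ _))
      · have hk' : k = K' + 1 := by omega
        subst hk'
        have hxKX := hmemX π hπ K'
        have hxKR : ‖traj f x₀ π K'‖ ≤ R := by
          have := hR hxKX
          rwa [mem_closedBall_zero_iff] at this
        have hd := hηle y₀ hy π hπ K' (le_refl K')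
        have hd1 : dist (traj f y₀ π K') (traj f x₀ π K') ≤ 1 :=
          le_trans hd (le_trans (min_le_right _ _) (min_le_right _ _))
        have hdρ : dist (traj f y₀ π K') (traj f x₀ π K') ≤ ρ :=
          le_trans hd (min_le_left _ _)
        have hxK : traj f x₀ π K' ∈ closedBall (0 : St n) (R + 1) := by
          rw [mem_closedBall_zero_iff]; linarith
        have hyK : traj f y₀ π K' ∈ closedBall (0 : St n) (R + 1) := by
          rw [mem_closedBall_zero_iff]
          calc ‖traj f y₀ π K'‖ = dist (traj f y₀ π K') 0 := by rw [dist_zero_right]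
            _ ≤ dist (traj f y₀ π K') (traj f x₀ π K') + dist (traj f x₀ π K') 0 :=
                dist_triangle _ _ _
            _ ≤ 1 + R := by rw [dist_zero_right]; linarith
            _ = R + 1 := by ring
        have := hρle (traj f y₀ π K', π K') ⟨hyK, hπ K'⟩
          (traj f x₀ π K', π K') ⟨hxK, hπ K'⟩
          (by rw [Prod.dist_eq]; simp only [dist_self]
              exact max_le hdρ (le_of_lt hρ))
        simpa [traj] using this
  -- choose N
  have hMεγpos : 0 < M * (ε + γ) := by positivity
  obtain ⟨N, hN⟩ := exists_pow_lt_of_lt_one (div_pos hε hMεγpos) hlam1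
  have hNle : lam ^ N * (M * (ε + γ)) < ε := (lt_div_iff₀ hMεγpos).mp hN
  obtain ⟨η, hη, hηap⟩ := happrox K γ hγ
  refine ⟨η, hη, fun y₀ hy₀ => ?_⟩
  rw [mem_ball] at hy₀
  have hy₀' : dist y₀ x₀ ≤ η := le_of_lt hy₀
  -- decay from a point close to the hitting point
  have hdecay : ∀ π, IsPolicy D π → ∀ k₁, 0 < k₁ → k₁ ≤ K →
      traj f x₀ π k₁ ∈ closedBall (0 : St n) ε →
      ∀ j, ‖traj f y₀ π (k₁ + j)‖ ≤ lam ^ j * (M * (ε + γ)) := by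
    intro π hπ k₁ hk₁pos hk₁K hk₁mem j
    have hzx : ‖traj f x₀ π k₁‖ ≤ ε := by rwa [mem_closedBall_zero_iff] at hk₁mem
    have hdzy : dist (traj f y₀ π k₁) (traj f x₀ π k₁) ≤ γ := hηap y₀ hy₀' π hπ k₁ hk₁K
    have hzy : ‖traj f y₀ π k₁‖ ≤ ε + γ := by
      calc ‖traj f y₀ π k₁‖ = dist (traj f y₀ π k₁) 0 := by rw [dist_zero_right]
        _ ≤ dist (traj f y₀ π k₁) (traj f x₀ π k₁) + dist (traj f x₀ π k₁) 0 :=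
            dist_triangle _ _ _
        _ ≤ γ + ε := by rw [dist_zero_right]; linarith
        _ = ε + γ := by ring
    have hzball : traj f y₀ π k₁ ∈ closedBall (0 : St n) r := by
      rw [mem_closedBall_zero_iff]; linarith
    have hπ' : IsPolicy D (fun j => π (k₁ + j)) := fun j => hπ _
    have h1 := hstab _ hzball _ hπ' j
    rw [traj_add']
    calc ‖traj f (traj f y₀ π k₁) (fun j => π (k₁ + j)) j‖
        ≤ lam ^ j * M * ‖traj f y₀ π k₁‖ := h1
      _ ≤ lam ^ j * (M * (ε + γ)) := by
          rw [mul_assoc]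
          exact mul_le_mul_of_nonneg_left (by nlinarith) (pow_nonneg hlam0.le j)
  constructor
  · -- safety with margin
    refine ⟨min (δ / 2) (r / 8), lt_min (by positivity) (by positivity), ?_⟩
    intro π hπ k
    have hXc : Xᶜ.Nonempty := by
      by_contra h
      rw [Set.not_nonempty_iff_eq_empty] at h
      have h2 := hδ π hπ 0
      rw [h, Metric.infDist_empty] at h2
      linarith
    obtain ⟨k₁, hk₁pos, hk₁K, hk₁mem⟩ := hK π hπ
    rcases le_or_gt k k₁ with h | h
    · have hdzy : dist (traj f y₀ π k) (traj f x₀ π k) ≤ γ :=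
        hηap y₀ hy₀' π hπ k (le_trans h hk₁K)
      have h1 : infDist (traj f x₀ π k) Xᶜ ≤ infDist (traj f y₀ π k) Xᶜ
          + dist (traj f x₀ π k) (traj f y₀ π k) := Metric.infDist_le_infDist_add_dist
      have h2 := hδ π hπ k
      rw [dist_comm] at h1
      have h3 : min (δ / 2) (r / 8) ≤ δ / 2 := min_le_left _ _
      linarith
    · have hj := hdecay π hπ k₁ hk₁pos hk₁K hk₁mem (k - k₁)
      have hkk : k₁ + (k - k₁) = k := by omega
      rw [hkk] at hj
      have hpow : lam ^ (k - k₁) ≤ 1 := pow_le_one₀ hlam0.le hlam1.le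
      have hw : ‖traj f y₀ π k‖ ≤ 3 * r / 4 := by nlinarith
      have h4 : r / 4 ≤ infDist (traj f y₀ π k) Xᶜ := by
        by_contra h5
        push_neg at h5
        obtain ⟨z, hzXc, hzd⟩ := (Metric.infDist_lt_iff hXc).mp h5
        have hz2 : z ∉ closedBall (0 : St n) r := fun hz3 => hzXc (hball hz3)
        rw [mem_closedBall_zero_iff] at hz2
        push_neg at hz2
        have h6 : dist (0 : St n) z ≤ dist (0 : St n) (traj f y₀ π k)
            + dist (traj f y₀ π k) z := dist_triangle _ _ _
        rw [dist_comm (0 : St n) (traj f y₀ π k), dist_zero_right] at h6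
        rw [dist_comm, dist_zero_right] at h6
        linarith
      have h3 : min (δ / 2) (r / 8) ≤ r / 8 := min_le_right _ _
      linarith
  · -- uniform hitting
    refine ⟨K + N, fun π hπ => ?_⟩
    obtain ⟨k₁, hk₁pos, hk₁K, hk₁mem⟩ := hK π hπ
    refine ⟨k₁ + N, by omega, by omega, ?_⟩
    rw [mem_closedBall_zero_iff]
    have hj := hdecay π hπ k₁ hk₁pos hk₁K hk₁mem N
    calc ‖traj f y₀ π (k₁ + N)‖ ≤ lam ^ N * (M * (ε + γ)) := hj
      _ ≤ ε := le_of_lt hNle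
end
end

section
/- Under Assumption 1, the value function V satisfies the dynamic programming principle: for every x ∈ ℝⁿ and every integer k ≥ 1, V(x) = sup_π max{ Σ_{i=1}^{k} ln(g(φ_x^π(i−1)) + 1) + V(φ_x^π(k)), max_{0 ≤ i ≤ k−1} [ Σ_{j₁=1}^{i} ln(g(φ_x^π(j₁−1)) + 1) − min_{j=1,…,n_X} ln(l(1 − h_j^X(φ_x^π(i)))) ] }, where all expressions take values in [0, ∞] with the convention ln 0 = −∞. -/
open Metric Set Filter MeasureTheory

noncomputable section

lemma my_ereal_assoc (a b : ℝ) (z : EReal) :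
    (a : EReal) + ((b : EReal) + z) = ((a + b : ℝ) : EReal) + z := by
  induction z using EReal.rec with
  | bot => simp
  | coe z => norm_cast; ring
  | top => simp

lemma my_coe_add_iSup {ι : Sort*} (c : ℝ) (f : ι → EReal) :
    (c : EReal) + ⨆ i, f i = ⨆ i, ((c : EReal) + f i) := by
  cases isEmpty_or_nonempty ι with
  | inl h => simp [iSup_of_empty]
  | inr h =>
    apply le_antisymm
    · have h1 : (⨆ i, f i) ≤ ((-c : ℝ) : EReal) + ⨆ i, ((c : EReal) + f i) := by
        apply iSup_le; intro i
        have he : ((-c : ℝ) : EReal) + ((c : EReal) + f i) = f i := by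
          rw [my_ereal_assoc]; norm_num
        calc f i = ((-c : ℝ) : EReal) + ((c : EReal) + f i) := he.symm
          _ ≤ _ := add_le_add_right (le_iSup (fun i => (c : EReal) + f i) i) _
      calc (c : EReal) + ⨆ i, f i
          ≤ (c : EReal) + (((-c : ℝ) : EReal) + ⨆ i, ((c : EReal) + f i)) :=
            add_le_add_right h1 _
        _ = _ := by rw [my_ereal_assoc]; norm_num
    · exact iSup_le fun i => add_le_add_right (le_iSup f i) _

lemma my_traj_congr {n m : ℕ} (f : St n → St m → St n) (x : St n) (π π' : ℕ → St m) :
    ∀ j, (∀ i < j, π i = π' i) → traj f x π j = traj f x π' j := by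
  intro j
  induction j with
  | zero => intro _; rfl
  | succ j ih =>
    intro h
    show f (traj f x π j) (π j) = f (traj f x π' j) (π' j)
    rw [ih (fun i hi => h i (Nat.lt_succ_of_lt hi)), h j (Nat.lt_succ_self j)]

lemma my_traj_shift {n m : ℕ} (f : St n → St m → St n) (x : St n) (π : ℕ → St m) (k : ℕ) :
    ∀ j, traj f x π (k + j) = traj f (traj f x π k) (fun i => π (k + i)) j := by
  intro j
  induction j with
  | zero => rfl
  | succ j ih =>
    show f (traj f x π (k + j)) (π (k + j)) = f (traj f (traj f x π k) _ j) _
    rw [ih]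

theorem stmt15
    {n m nX : ℕ} (hnX : 0 < nX)
    (f : St n → St m → St n) (hfpoly : IsPolyMap2 f)
    (D : Set (St m)) (hD : IsCompact D)
    (hf0 : ∀ d ∈ D, f 0 d = 0)
    (hX : Fin nX → St n → ℝ) (hXpoly : ∀ j, IsPolyFun (hX j))
    (hX0 : ∀ j, hX j 0 = 0) (hXpos : ∀ j, ∀ x : St n, x ≠ 0 → 0 < hX j x)
    (X : Set (St n)) (hXdef : X = {x | ∀ j, hX j x < 1})
    (hXbdd : Bornology.IsBounded X) (hXopen : IsOpen X)
    (hA1 : Assumption1 f D X)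
    (g : St n → ℝ) (hgpoly : IsPolyFun g) (hgnn : ∀ x, 0 ≤ g x)
    (hgzero : ∀ x : St n, g x = 0 ↔ x = 0)
    :
    ∀ x : St n, ∀ k : ℕ, 1 ≤ k →
      Vval f D hX g x =
        ⨆ π ∈ {π : ℕ → St m | IsPolicy D π},
          max (((∑ i ∈ Finset.range k, Real.log (g (traj f x π i) + 1) : ℝ) : EReal)
                + Vval f D hX g (traj f x π k))
              (⨆ i ∈ Finset.range k,
                ((∑ j1 ∈ Finset.range i, Real.log (g (traj f x π j1) + 1) : ℝ) : EReal)
                  - ⨅ j : Fin nX, elog (max (1 - hX j (traj f x π i)) 0)) := by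
  intro x k _hk
  apply le_antisymm
  · refine iSup₂_le fun π hπ => iSup_le fun N => ?_
    by_cases hN : N < k
    · refine le_iSup₂_of_le π hπ (le_trans ?_ (le_max_right _ _))
      exact le_iSup₂_of_le N (Finset.mem_range.mpr hN) le_rfl
    · push_neg at hN
      obtain ⟨j, rfl⟩ : ∃ j, N = k + j := ⟨N - k, (Nat.add_sub_cancel' hN).symm⟩
      set y := traj f x π k with hy
      set π' : ℕ → St m := fun i => π (k + i) with hπ'def
      have hπ'pol : IsPolicy D π' := fun i => hπ (k + i)
      have htr : ∀ i, traj f x π (k + i) = traj f y π' i := fun i => my_traj_shift f x π k i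
      have hsum : (∑ i ∈ Finset.range (k + j), Real.log (g (traj f x π i) + 1))
          = (∑ i ∈ Finset.range k, Real.log (g (traj f x π i) + 1))
            + ∑ i ∈ Finset.range j, Real.log (g (traj f y π' i) + 1) := by
        rw [Finset.sum_range_add]
        congr 1
        exact Finset.sum_congr rfl fun i _ => by rw [htr i]
      have key : ((∑ i ∈ Finset.range (k + j), Real.log (g (traj f x π i) + 1) : ℝ) : EReal)
            - ⨅ jj : Fin nX, elog (max (1 - hX jj (traj f x π (k + j))) 0)
          = ((∑ i ∈ Finset.range k, Real.log (g (traj f x π i) + 1) : ℝ) : EReal)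
            + (((∑ i ∈ Finset.range j, Real.log (g (traj f y π' i) + 1) : ℝ) : EReal)
                - ⨅ jj : Fin nX, elog (max (1 - hX jj (traj f y π' j)) 0)) := by
        rw [hsum, htr j, sub_eq_add_neg, sub_eq_add_neg, my_ereal_assoc]
      rw [key]
      have hV : (((∑ i ∈ Finset.range j, Real.log (g (traj f y π' i) + 1) : ℝ) : EReal)
            - ⨅ jj : Fin nX, elog (max (1 - hX jj (traj f y π' j)) 0))
          ≤ Vval f D hX g y :=
        le_iSup₂_of_le π' hπ'pol (le_iSup_of_le j le_rfl)
      refine le_iSup₂_of_le π hπ (le_trans ?_ (le_max_left _ _))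
      exact add_le_add_right hV _
  · refine iSup₂_le fun π hπ => max_le ?_ ?_
    · set y := traj f x π k with hy
      simp only [Vval, my_coe_add_iSup]
      refine iSup₂_le fun π' hπ' => iSup_le fun N => ?_
      set πc : ℕ → St m := fun i => if i < k then π i else π' (i - k) with hπcdef
      have hpolc : IsPolicy D πc := by
        intro i
        by_cases h : i < k
        · simpa [πc, h] using hπ i
        · simpa [πc, h] using hπ' (i - k)
      have h1 : ∀ i ≤ k, traj f x πc i = traj f x π i := fun i hi =>
        my_traj_congr f x πc π i (fun l hl => by simp [πc, lt_of_lt_of_le hl hi])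
      have h2 : ∀ jj, traj f x πc (k + jj) = traj f y π' jj := by
        intro jj
        rw [my_traj_shift f x πc k jj, h1 k le_rfl, ← hy]
        congr 1
        funext i
        simp [πc]
      have hsum : (∑ i ∈ Finset.range (k + N), Real.log (g (traj f x πc i) + 1))
          = (∑ i ∈ Finset.range k, Real.log (g (traj f x π i) + 1))
            + ∑ i ∈ Finset.range N, Real.log (g (traj f y π' i) + 1) := by
        rw [Finset.sum_range_add]
        congr 1
        · exact Finset.sum_congr rfl fun i hi => by
            rw [h1 i (le_of_lt (Finset.mem_range.mp hi))]
        · exact Finset.sum_congr rfl fun i _ => by rw [h2 i]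
      refine le_trans (le_of_eq ?_) (le_iSup₂_of_le πc hpolc (le_iSup_of_le (k + N) le_rfl))
      rw [hsum, h2 N, sub_eq_add_neg, sub_eq_add_neg, my_ereal_assoc]
    · exact iSup₂_le fun i _ => le_iSup₂_of_le π hπ (le_iSup_of_le i le_rfl)
end
end

section
/- Under Assumption 1, the transformed value function v satisfies the dynamic programming principle: for every x ∈ ℝⁿ and every integer k ≥ 1, v(x) = sup_π max{ 1 − (1 − v(φ_x^π(k))) / Π_{i=1}^{k} (g(φ_x^π(i−1)) + 1), max_{0 ≤ i ≤ k−1} [ 1 − min_{j=1,…,n_X} l(1 − h_j^X(φ_x^π(i))) / Π_{j₁=1}^{i} (g(φ_x^π(j₁−1)) + 1) ] }. -/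
open Metric Set Filter MeasureTheory

noncomputable section

section DPPHelpers

variable {n m nX : ℕ}

/-- The state-constraint margin function `min_j max(1 - hX_j x, 0)`. -/
def Lfun (hX : Fin nX → St n → ℝ) (y : St n) : ℝ := ⨅ j : Fin nX, max (1 - hX j y) 0

/-- Running product `∏_{i<t} (g(x_i) + 1)` along the trajectory. -/
def Pprod (f : St n → St m → St n) (g : St n → ℝ) (x : St n) (π : ℕ → St m) (t : ℕ) : ℝ :=
  ∏ i ∈ Finset.range t, (g (traj f x π i) + 1)

/-- The transformed running cost `1 - L(x_t)/P_t`. -/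
def tm (f : St n → St m → St n) (hX : Fin nX → St n → ℝ) (g : St n → ℝ)
    (x : St n) (π : ℕ → St m) (t : ℕ) : ℝ :=
  1 - Lfun hX (traj f x π t) / Pprod f g x π t

/-- The set of achievable transformed costs. -/
def Aset (f : St n → St m → St n) (D : Set (St m)) (hX : Fin nX → St n → ℝ) (g : St n → ℝ)
    (x : St n) : Set ℝ := {y | ∃ π, IsPolicy D π ∧ ∃ t, y = tm f hX g x π t}

/-- The extended-real running cost appearing in `Vval`. -/
def aER (f : St n → St m → St n) (hX : Fin nX → St n → ℝ) (g : St n → ℝ)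
    (x : St n) (π : ℕ → St m) (t : ℕ) : EReal :=
  ((∑ i ∈ Finset.range t, Real.log (g (traj f x π i) + 1) : ℝ) : EReal)
      - ⨅ j : Fin nX, elog (max (1 - hX j (traj f x π t)) 0)

/-- The Kruzhkov transform on extended reals. -/
def e2r (a : EReal) : ℝ := if a = ⊤ then 1 else 1 - Real.exp (-a.toReal)

lemma Vval_eq (f : St n → St m → St n) (D : Set (St m)) (hX : Fin nX → St n → ℝ)
    (g : St n → ℝ) (x : St n) :
    Vval f D hX g x = ⨆ π ∈ {π : ℕ → St m | IsPolicy D π}, ⨆ k : ℕ, aER f hX g x π k := rfl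

lemma vval_eq (f : St n → St m → St n) (D : Set (St m)) (hX : Fin nX → St n → ℝ)
    (g : St n → ℝ) (x : St n) : vval f D hX g x = e2r (Vval f D hX g x) := rfl

section Bounds

variable {f : St n → St m → St n} {D : Set (St m)} {hX : Fin nX → St n → ℝ} {g : St n → ℝ}

lemma Lfun_nonneg (hX : Fin nX → St n → ℝ) (y : St n) : 0 ≤ Lfun hX y :=
  Real.iInf_nonneg fun _ => le_max_right _ _

lemma Lfun_le_one (hnX : 0 < nX) (hXnn : ∀ j y, 0 ≤ hX j y) (y : St n) : Lfun hX y ≤ 1 := by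
  haveI : Nonempty (Fin nX) := ⟨⟨0, hnX⟩⟩
  have hbdd : BddBelow (Set.range fun j => max (1 - hX j y) 0) := by
    refine ⟨0, ?_⟩
    rintro z ⟨j, rfl⟩
    exact le_max_right _ _
  refine le_trans (ciInf_le hbdd ⟨0, hnX⟩) ?_
  have := hXnn ⟨0, hnX⟩ y
  exact max_le (by linarith) (by norm_num)

lemma one_le_Pprod (hgnn : ∀ x, 0 ≤ g x) (x : St n) (π : ℕ → St m) (t : ℕ) :
    1 ≤ Pprod f g x π t := by
  rw [Pprod]
  calc (1:ℝ) = ∏ _i ∈ Finset.range t, (1:ℝ) := by simp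
  _ ≤ ∏ i ∈ Finset.range t, (g (traj f x π i) + 1) :=
    Finset.prod_le_prod (fun i _ => by norm_num) (fun i _ => by linarith [hgnn (traj f x π i)])

lemma Pprod_pos (hgnn : ∀ x, 0 ≤ g x) (x : St n) (π : ℕ → St m) (t : ℕ) :
    0 < Pprod f g x π t :=
  lt_of_lt_of_le one_pos (one_le_Pprod hgnn x π t)

lemma tm_le_one (hgnn : ∀ x, 0 ≤ g x) (x : St n) (π : ℕ → St m) (t : ℕ) :
    tm f hX g x π t ≤ 1 := by
  have h1 := Lfun_nonneg hX (traj f x π t)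
  have h2 := Pprod_pos (f := f) hgnn x π t
  have : 0 ≤ Lfun hX (traj f x π t) / Pprod f g x π t := div_nonneg h1 h2.le
  rw [tm]; linarith

lemma tm_nonneg (hnX : 0 < nX) (hXnn : ∀ j y, 0 ≤ hX j y) (hgnn : ∀ x, 0 ≤ g x)
    (x : St n) (π : ℕ → St m) (t : ℕ) : 0 ≤ tm f hX g x π t := by
  have h1 := Lfun_le_one (hX := hX) hnX hXnn (traj f x π t)
  have h2 := one_le_Pprod (f := f) (g := g) hgnn x π t
  have h3 : Lfun hX (traj f x π t) / Pprod f g x π t ≤ 1 :=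
    (div_le_one (by linarith)).mpr (by linarith)
  rw [tm]; linarith

end Bounds

/-- Concatenation of policies: follow `π` for `k` steps, then `σ`. -/
def pconcat (π σ : ℕ → St m) (k : ℕ) : ℕ → St m := fun i => if i < k then π i else σ (i - k)

/-- Shift of a policy by `k` steps. -/
def pshift (π : ℕ → St m) (k : ℕ) : ℕ → St m := fun i => π (k + i)

lemma pconcat_policy {D : Set (St m)} {π σ : ℕ → St m} {k : ℕ}
    (hπ : IsPolicy D π) (hσ : IsPolicy D σ) : IsPolicy D (pconcat π σ k) := by
  intro i
  unfold pconcat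
  split_ifs
  · exact hπ i
  · exact hσ _

lemma pshift_policy {D : Set (St m)} {π : ℕ → St m} {k : ℕ}
    (hπ : IsPolicy D π) : IsPolicy D (pshift π k) := fun i => hπ _

lemma traj_shift_s16 (f : St n → St m → St n) (x : St n) (π : ℕ → St m) (k : ℕ) :
    ∀ s, traj f (traj f x π k) (pshift π k) s = traj f x π (k + s)
  | 0 => rfl
  | s + 1 => by
    show f (traj f (traj f x π k) (pshift π k) s) (pshift π k s) = _
    rw [traj_shift_s16 f x π k s]
    show f (traj f x π (k + s)) (π (k + s)) = traj f x π (k + (s + 1))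
    have : k + (s + 1) = (k + s) + 1 := by omega
    rw [this]
    rfl

lemma traj_concat_le (f : St n → St m → St n) (x : St n) (π σ : ℕ → St m) (k : ℕ) :
    ∀ i, i ≤ k → traj f x (pconcat π σ k) i = traj f x π i
  | 0, _ => rfl
  | i + 1, h => by
    show f (traj f x (pconcat π σ k) i) (pconcat π σ k i) = f (traj f x π i) (π i)
    rw [traj_concat_le f x π σ k i (by omega)]
    have : pconcat π σ k i = π i := if_pos (by omega)
    rw [this]

lemma traj_concat_add (f : St n → St m → St n) (x : St n) (π σ : ℕ → St m) (k : ℕ) :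
    ∀ s, traj f x (pconcat π σ k) (k + s) = traj f (traj f x π k) σ s
  | 0 => traj_concat_le f x π σ k k le_rfl
  | s + 1 => by
    have h1 : k + (s + 1) = (k + s) + 1 := by omega
    rw [h1]
    show f (traj f x (pconcat π σ k) (k + s)) (pconcat π σ k (k + s)) = _
    rw [traj_concat_add f x π σ k s]
    have h2 : pconcat π σ k (k + s) = σ s := by
      have hlt : ¬ (k + s < k) := by omega
      have hsub : k + s - k = s := by omega
      simp only [pconcat, if_neg hlt, hsub]
    rw [h2]
    rfl

lemma Pprod_shift_add (f : St n → St m → St n) (g : St n → ℝ) (x : St n) (π : ℕ → St m)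
    (k s : ℕ) :
    Pprod f g x π (k + s) = Pprod f g x π k * Pprod f g (traj f x π k) (pshift π k) s := by
  rw [Pprod, Finset.prod_range_add]
  congr 1
  refine Finset.prod_congr rfl fun i _ => ?_
  rw [traj_shift_s16]

lemma Pprod_concat_add (f : St n → St m → St n) (g : St n → ℝ) (x : St n) (π σ : ℕ → St m)
    (k s : ℕ) :
    Pprod f g x (pconcat π σ k) (k + s)
      = Pprod f g x π k * Pprod f g (traj f x π k) σ s := by
  rw [Pprod, Finset.prod_range_add]
  congr 1
  · refine Finset.prod_congr rfl fun i hi => ?_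
    rw [traj_concat_le f x π σ k i (by simpa using (Finset.mem_range.mp hi).le)]
  · refine Finset.prod_congr rfl fun i _ => ?_
    rw [traj_concat_add]

lemma tm_shift {f : St n → St m → St n} {g : St n → ℝ} {hX : Fin nX → St n → ℝ}
    (hgnn : ∀ x, 0 ≤ g x) (x : St n) (π : ℕ → St m) (k s : ℕ) :
    tm f hX g x π (k + s)
      = 1 - (1 - tm f hX g (traj f x π k) (pshift π k) s) / Pprod f g x π k := by
  have hP := Pprod_pos (f := f) hgnn x π k
  have hQ := Pprod_pos (f := f) hgnn (traj f x π k) (pshift π k) s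
  rw [tm, tm, Pprod_shift_add, ← traj_shift_s16]
  field_simp
  ring

lemma tm_concat {f : St n → St m → St n} {g : St n → ℝ} {hX : Fin nX → St n → ℝ}
    (hgnn : ∀ x, 0 ≤ g x) (x : St n) (π σ : ℕ → St m) (k s : ℕ) :
    tm f hX g x (pconcat π σ k) (k + s)
      = 1 - (1 - tm f hX g (traj f x π k) σ s) / Pprod f g x π k := by
  have hP := Pprod_pos (f := f) hgnn x π k
  have hQ := Pprod_pos (f := f) hgnn (traj f x π k) σ s
  rw [tm, tm, Pprod_concat_add, traj_concat_add]
  field_simp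
  ring

lemma elog_mono {s t : ℝ} (hs : 0 ≤ s) (hst : s ≤ t) : elog s ≤ elog t := by
  unfold elog
  rcases eq_or_lt_of_le hs with h | h
  · rw [if_pos h.symm]; exact bot_le
  · have hs0 : s ≠ 0 := ne_of_gt h
    have ht0 : t ≠ 0 := ne_of_gt (lt_of_lt_of_le h hst)
    rw [if_neg hs0, if_neg ht0]
    exact_mod_cast Real.log_le_log h hst

section EMain

variable {f : St n → St m → St n} {D : Set (St m)} {hX : Fin nX → St n → ℝ} {g : St n → ℝ}

lemma aER_eq (hnX : 0 < nX) (hXnn : ∀ j y, 0 ≤ hX j y)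
    (x : St n) (π : ℕ → St m) (t : ℕ) :
    aER f hX g x π t = if Lfun hX (traj f x π t) = 0 then (⊤ : EReal)
      else (((∑ i ∈ Finset.range t, Real.log (g (traj f x π i) + 1))
              - Real.log (Lfun hX (traj f x π t)) : ℝ) : EReal) := by
  haveI : Nonempty (Fin nX) := ⟨⟨0, hnX⟩⟩
  set y := traj f x π t with hy
  set c : Fin nX → ℝ := fun j => max (1 - hX j y) 0 with hc
  obtain ⟨j0, hj0⟩ := Finite.exists_min c
  have hbdd : BddBelow (Set.range c) := by
    refine ⟨0, ?_⟩
    rintro z ⟨j, rfl⟩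
    exact le_max_right _ _
  have hcmin : Lfun hX y = c j0 :=
    le_antisymm (ciInf_le hbdd j0) (le_ciInf hj0)
  have hinf : (⨅ j : Fin nX, elog (c j)) = elog (c j0) :=
    le_antisymm (iInf_le _ j0) (le_iInf fun j => elog_mono (le_max_right _ _) (hj0 j))
  have haer : aER f hX g x π t
      = ((∑ i ∈ Finset.range t, Real.log (g (traj f x π i) + 1) : ℝ) : EReal) - elog (c j0) := by
    rw [aER, ← hinf]
  rw [haer]
  by_cases h : Lfun hX y = 0
  · rw [if_pos h]
    have h0 : c j0 = 0 := by rw [← hcmin]; exact h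
    rw [h0]
    have : elog 0 = ⊥ := if_pos rfl
    rw [this]
    exact EReal.sub_bot (EReal.coe_ne_bot _)
  · rw [if_neg h]
    have hc0 : c j0 ≠ 0 := by rw [← hcmin]; exact h
    rw [elog, if_neg hc0, ← EReal.coe_sub, hcmin]

lemma exp_S_eq_Pprod (hgnn : ∀ x, 0 ≤ g x) (x : St n) (π : ℕ → St m) (t : ℕ) :
    Real.exp (∑ i ∈ Finset.range t, Real.log (g (traj f x π i) + 1)) = Pprod f g x π t := by
  rw [Real.exp_sum, Pprod]
  exact Finset.prod_congr rfl fun i _ => Real.exp_log (by linarith [hgnn (traj f x π i)])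

lemma tm_eq_e2r (hnX : 0 < nX) (hXnn : ∀ j y, 0 ≤ hX j y) (hgnn : ∀ x, 0 ≤ g x)
    (x : St n) (π : ℕ → St m) (t : ℕ) :
    tm f hX g x π t = e2r (aER f hX g x π t) := by
  rw [aER_eq hnX hXnn]
  by_cases h : Lfun hX (traj f x π t) = 0
  · rw [if_pos h]
    have : e2r (⊤ : EReal) = 1 := if_pos rfl
    rw [this, tm, h, zero_div, sub_zero]
  · rw [if_neg h]
    have hL : 0 < Lfun hX (traj f x π t) := lt_of_le_of_ne (Lfun_nonneg hX _) (Ne.symm h)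
    rw [e2r, if_neg (EReal.coe_ne_top _), EReal.toReal_coe, tm]
    have hexp : Real.exp (-((∑ i ∈ Finset.range t, Real.log (g (traj f x π i) + 1))
        - Real.log (Lfun hX (traj f x π t))))
        = Lfun hX (traj f x π t) / Pprod f g x π t := by
      rw [neg_sub, Real.exp_sub, Real.exp_log hL, exp_S_eq_Pprod hgnn]
    rw [hexp]

lemma aER_nonneg (hnX : 0 < nX) (hXnn : ∀ j y, 0 ≤ hX j y) (hgnn : ∀ x, 0 ≤ g x)
    (x : St n) (π : ℕ → St m) (t : ℕ) : 0 ≤ aER f hX g x π t := by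
  rw [aER_eq hnX hXnn]
  split_ifs with h
  · exact le_top
  · have hL : 0 < Lfun hX (traj f x π t) := lt_of_le_of_ne (Lfun_nonneg hX _) (Ne.symm h)
    have hL1 : Lfun hX (traj f x π t) ≤ 1 := Lfun_le_one hnX hXnn _
    have hlog : Real.log (Lfun hX (traj f x π t)) ≤ 0 := Real.log_nonpos hL.le hL1
    have hS : (0:ℝ) ≤ ∑ i ∈ Finset.range t, Real.log (g (traj f x π i) + 1) :=
      Finset.sum_nonneg fun i _ => Real.log_nonneg (by linarith [hgnn (traj f x π i)])
    exact_mod_cast (by linarith :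
      (0:ℝ) ≤ (∑ i ∈ Finset.range t, Real.log (g (traj f x π i) + 1))
        - Real.log (Lfun hX (traj f x π t)))

lemma e2r_le_one (a : EReal) : e2r a ≤ 1 := by
  unfold e2r
  split_ifs
  · exact le_refl 1
  · linarith [Real.exp_pos (-a.toReal)]

lemma e2r_mono {a b : EReal} (ha : a ≠ ⊥) (hab : a ≤ b) : e2r a ≤ e2r b := by
  by_cases hb : b = ⊤
  · rw [hb]
    have : e2r (⊤ : EReal) = 1 := if_pos rfl
    rw [this]
    exact e2r_le_one a
  · have hat : a ≠ ⊤ := by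
      intro h; rw [h] at hab; exact hb (top_le_iff.mp hab)
    unfold e2r
    rw [if_neg hat, if_neg hb]
    have h1 := EReal.toReal_le_toReal hab ha hb
    have h2 := Real.exp_le_exp.mpr (neg_le_neg h1)
    linarith

lemma aER_le_Vval {x : St n} {π : ℕ → St m} (hπ : IsPolicy D π) (t : ℕ) :
    aER f hX g x π t ≤ Vval f D hX g x := by
  rw [Vval_eq]
  refine le_trans (le_iSup _ t) ?_
  exact le_iSup₂ (f := fun (π : ℕ → St m) (_ : π ∈ {π : ℕ → St m | IsPolicy D π}) =>
    ⨆ k : ℕ, aER f hX g x π k) π hπ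

lemma Vval_of_no_policy {x : St n} (h : ∀ π : ℕ → St m, ¬ IsPolicy D π) :
    Vval f D hX g x = ⊥ := by
  rw [Vval_eq]
  simp only [Set.mem_setOf_eq]
  rw [iSup_eq_bot]
  intro π
  rw [iSup_eq_bot]
  intro hπ
  exact absurd hπ (h π)

lemma vval_nonneg (hnX : 0 < nX) (hXnn : ∀ j y, 0 ≤ hX j y) (hgnn : ∀ x, 0 ≤ g x)
    (x : St n) : 0 ≤ vval f D hX g x := by
  rw [vval_eq]
  by_cases hp : ∃ π : ℕ → St m, IsPolicy D π
  · obtain ⟨π, hπ⟩ := hp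
    have h0 : (0 : EReal) ≤ Vval f D hX g x :=
      le_trans (aER_nonneg hnX hXnn hgnn x π 0) (aER_le_Vval hπ 0)
    unfold e2r
    split_ifs with h
    · norm_num
    · have hb : Vval f D hX g x ≠ ⊥ := by
        intro hbb; rw [hbb] at h0; exact absurd (le_bot_iff.mp h0) (by norm_num)
      have htR : 0 ≤ (Vval f D hX g x).toReal := by
        have := EReal.toReal_le_toReal h0 (by norm_num) h
        simpa using this
      have : Real.exp (-(Vval f D hX g x).toReal) ≤ Real.exp 0 :=
        Real.exp_le_exp.mpr (by linarith)
      rw [Real.exp_zero] at this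
      linarith
  · push_neg at hp
    rw [Vval_of_no_policy hp]
    have : e2r (⊥ : EReal) = 0 := by
      unfold e2r
      rw [if_neg (by norm_num : (⊥ : EReal) ≠ ⊤)]
      simp
    rw [this]

lemma Vval_le_of_lt_one (hnX : 0 < nX) (hXnn : ∀ j y, 0 ≤ hX j y) (hgnn : ∀ x, 0 ≤ g x)
    {x : St n} {s : ℝ}
    (hs : ∀ π, IsPolicy D π → ∀ t, tm f hX g x π t ≤ s) (hs1 : s < 1) :
    Vval f D hX g x ≤ ((-Real.log (1 - s) : ℝ) : EReal) := by
  rw [Vval_eq]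
  refine iSup₂_le fun π hπ => iSup_le fun t => ?_
  rw [aER_eq hnX hXnn]
  have htm := hs π hπ t
  by_cases h : Lfun hX (traj f x π t) = 0
  · exfalso
    rw [tm, h, zero_div, sub_zero] at htm
    linarith
  · rw [if_neg h]
    have hL : 0 < Lfun hX (traj f x π t) := lt_of_le_of_ne (Lfun_nonneg hX _) (Ne.symm h)
    have hP := Pprod_pos (f := f) hgnn x π t
    rw [EReal.coe_le_coe_iff]
    rw [tm] at htm
    have h1 : 1 - s ≤ Lfun hX (traj f x π t) / Pprod f g x π t := by linarith
    have h2 : Real.log (1 - s) ≤ Real.log (Lfun hX (traj f x π t) / Pprod f g x π t) :=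
      Real.log_le_log (by linarith) h1
    have h3 : Real.log (Lfun hX (traj f x π t) / Pprod f g x π t)
        = Real.log (Lfun hX (traj f x π t)) - Real.log (Pprod f g x π t) :=
      Real.log_div (ne_of_gt hL) (ne_of_gt hP)
    have h4 : Real.log (Pprod f g x π t)
        = ∑ i ∈ Finset.range t, Real.log (g (traj f x π i) + 1) := by
      rw [← exp_S_eq_Pprod hgnn, Real.log_exp]
    rw [h3, h4] at h2
    linarith

lemma vval_eq_sSup_Aset (hnX : 0 < nX) (hXnn : ∀ j y, 0 ≤ hX j y) (hgnn : ∀ x, 0 ≤ g x)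
    (x : St n) : vval f D hX g x = sSup (Aset f D hX g x) := by
  have hbddA : ∀ y ∈ Aset f D hX g x, y ≤ 1 := by
    rintro y ⟨π, hπ, t, rfl⟩
    exact tm_le_one hgnn x π t
  have hA_bdd : BddAbove (Aset f D hX g x) := ⟨1, hbddA⟩
  apply le_antisymm
  · by_cases hp : ∃ π : ℕ → St m, IsPolicy D π
    · obtain ⟨π₀, hπ₀⟩ := hp
      have hAne : (Aset f D hX g x).Nonempty := ⟨tm f hX g x π₀ 0, π₀, hπ₀, 0, rfl⟩
      have hmem_le : ∀ π, IsPolicy D π → ∀ t, tm f hX g x π t ≤ sSup (Aset f D hX g x) :=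
        fun π hπ t => le_csSup hA_bdd ⟨π, hπ, t, rfl⟩
      by_cases hV : Vval f D hX g x = ⊤
      · rw [vval_eq, e2r, if_pos hV]
        by_contra hcon
        push_neg at hcon
        have hle := Vval_le_of_lt_one hnX hXnn hgnn hmem_le hcon
        rw [hV] at hle
        exact EReal.coe_ne_top _ (top_le_iff.mp hle)
      · rcases lt_or_ge (sSup (Aset f D hX g x)) 1 with hs1 | hs1
        · have hle := Vval_le_of_lt_one hnX hXnn hgnn hmem_le hs1
          have h0 : (0 : EReal) ≤ Vval f D hX g x :=
            le_trans (aER_nonneg hnX hXnn hgnn x π₀ 0) (aER_le_Vval hπ₀ 0)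
          have hVb : Vval f D hX g x ≠ ⊥ := by
            intro hbb; rw [hbb] at h0; exact absurd (le_bot_iff.mp h0) (by norm_num)
          rw [vval_eq, e2r, if_neg hV]
          have htr := EReal.toReal_le_toReal hle hVb (EReal.coe_ne_top _)
          rw [EReal.toReal_coe] at htr
          have hexp : Real.exp (Real.log (1 - sSup (Aset f D hX g x)))
              = 1 - sSup (Aset f D hX g x) := Real.exp_log (by linarith)
          have hmon : Real.exp (Real.log (1 - sSup (Aset f D hX g x)))
              ≤ Real.exp (-(Vval f D hX g x).toReal) := Real.exp_le_exp.mpr (by linarith)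
          rw [hexp] at hmon
          linarith
        · refine le_trans ?_ hs1
          rw [vval_eq]
          exact e2r_le_one _
    · push_neg at hp
      have hAe : Aset f D hX g x = ∅ := by
        rw [Set.eq_empty_iff_forall_notMem]
        rintro y ⟨π, hπ, -⟩
        exact hp π hπ
      rw [hAe, Real.sSup_empty, vval_eq, Vval_of_no_policy hp]
      have : e2r (⊥ : EReal) = 0 := by
        unfold e2r
        rw [if_neg (by norm_num : (⊥ : EReal) ≠ ⊤)]
        simp
      rw [this]
  · refine Real.sSup_le ?_ (vval_nonneg hnX hXnn hgnn x)
    rintro y ⟨π, hπ, t, rfl⟩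
    rw [tm_eq_e2r hnX hXnn hgnn, vval_eq]
    refine e2r_mono ?_ (aER_le_Vval hπ t)
    intro hbb
    have := aER_nonneg hnX hXnn hgnn (f := f) (g := g) (hX := hX) x π t
    rw [hbb] at this
    exact absurd (le_bot_iff.mp this) (by norm_num)

end EMain

end DPPHelpers

theorem stmt16
    {n m nX : ℕ} (hnX : 0 < nX)
    (f : St n → St m → St n) (hfpoly : IsPolyMap2 f)
    (D : Set (St m)) (hD : IsCompact D)
    (hf0 : ∀ d ∈ D, f 0 d = 0)
    (hX : Fin nX → St n → ℝ) (hXpoly : ∀ j, IsPolyFun (hX j))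
    (hX0 : ∀ j, hX j 0 = 0) (hXpos : ∀ j, ∀ x : St n, x ≠ 0 → 0 < hX j x)
    (X : Set (St n)) (hXdef : X = {x | ∀ j, hX j x < 1})
    (hXbdd : Bornology.IsBounded X) (hXopen : IsOpen X)
    (hA1 : Assumption1 f D X)
    (g : St n → ℝ) (hgpoly : IsPolyFun g) (hgnn : ∀ x, 0 ≤ g x)
    (hgzero : ∀ x : St n, g x = 0 ↔ x = 0)
    :
    ∀ x : St n, ∀ k : ℕ, 1 ≤ k →
      vval f D hX g x =
        sSup {y : ℝ | ∃ π, IsPolicy D π ∧ y =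
          max (1 - (1 - vval f D hX g (traj f x π k)) /
                ∏ i ∈ Finset.range k, (g (traj f x π i) + 1))
              (⨆ i : Fin k, (1 - (⨅ j : Fin nX, max (1 - hX j (traj f x π (i : ℕ))) 0) /
                ∏ j1 ∈ Finset.range (i : ℕ), (g (traj f x π j1) + 1)))} := by
  intro x k hk
  haveI : Nonempty (Fin k) := ⟨⟨0, hk⟩⟩
  have hXnn : ∀ j y, 0 ≤ hX j y := by
    intro j y
    by_cases h : y = 0
    · rw [h, hX0 j]
    · exact (hXpos j y h).le
  -- Abbreviations
  have hvA : ∀ z : St n, vval f D hX g z = sSup (Aset f D hX g z) :=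
    fun z => vval_eq_sSup_Aset hnX hXnn hgnn z
  have hA_bdd : ∀ z : St n, BddAbove (Aset f D hX g z) := by
    intro z
    refine ⟨1, ?_⟩
    rintro y ⟨π, hπ, t, rfl⟩
    exact tm_le_one hgnn z π t
  -- identify the RHS set
  have hBset : {y : ℝ | ∃ π, IsPolicy D π ∧ y =
          max (1 - (1 - vval f D hX g (traj f x π k)) /
                ∏ i ∈ Finset.range k, (g (traj f x π i) + 1))
              (⨆ i : Fin k, (1 - (⨅ j : Fin nX, max (1 - hX j (traj f x π (i : ℕ))) 0) /
                ∏ j1 ∈ Finset.range (i : ℕ), (g (traj f x π j1) + 1)))}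
      = {y : ℝ | ∃ π, IsPolicy D π ∧ y =
          max (1 - (1 - vval f D hX g (traj f x π k)) / Pprod f g x π k)
              (⨆ i : Fin k, tm f hX g x π (i : ℕ))} := rfl
  rw [hBset]
  set B := {y : ℝ | ∃ π, IsPolicy D π ∧ y =
          max (1 - (1 - vval f D hX g (traj f x π k)) / Pprod f g x π k)
              (⨆ i : Fin k, tm f hX g x π (i : ℕ))} with hBdef
  have hB_le_one : ∀ y ∈ B, y ≤ 1 := by
    rintro y ⟨π, hπ, rfl⟩
    refine max_le ?_ ?_
    · have hP := Pprod_pos (f := f) hgnn x π k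
      have hv1 : vval f D hX g (traj f x π k) ≤ 1 := by
        rw [vval_eq]; exact e2r_le_one _
      have : 0 ≤ (1 - vval f D hX g (traj f x π k)) / Pprod f g x π k :=
        div_nonneg (by linarith) hP.le
      linarith
    · exact ciSup_le fun i => tm_le_one hgnn x π (i : ℕ)
  have hB_bdd : BddAbove B := ⟨1, hB_le_one⟩
  rw [hvA x]
  apply le_antisymm
  · -- sSup A ≤ sSup B
    have h0B : 0 ≤ sSup B := by
      by_cases hp : ∃ π : ℕ → St m, IsPolicy D π
      · obtain ⟨π₀, hπ₀⟩ := hp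
        have hyB : max (1 - (1 - vval f D hX g (traj f x π₀ k)) / Pprod f g x π₀ k)
              (⨆ i : Fin k, tm f hX g x π₀ (i : ℕ)) ∈ B := ⟨π₀, hπ₀, rfl⟩
        refine le_trans ?_ (le_csSup hB_bdd hyB)
        refine le_trans ?_ (le_max_right _ _)
        refine le_trans (tm_nonneg (f := f) (g := g) hnX hXnn hgnn x π₀ 0) ?_
        exact le_ciSup (f := fun i : Fin k => tm f hX g x π₀ (i : ℕ))
          (Set.Finite.bddAbove (Set.finite_range _)) (⟨0, hk⟩ : Fin k)
      · push_neg at hp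
        have hBe : B = ∅ := by
          rw [Set.eq_empty_iff_forall_notMem]
          rintro y ⟨π, hπ, -⟩
          exact hp π hπ
        rw [hBe, Real.sSup_empty]
    refine Real.sSup_le ?_ h0B
    rintro y ⟨π, hπ, t, rfl⟩
    have hyB : max (1 - (1 - vval f D hX g (traj f x π k)) / Pprod f g x π k)
          (⨆ i : Fin k, tm f hX g x π (i : ℕ)) ∈ B := ⟨π, hπ, rfl⟩
    refine le_trans ?_ (le_csSup hB_bdd hyB)
    rcases lt_or_ge t k with ht | ht
    · refine le_trans ?_ (le_max_right _ _)
      exact le_ciSup (f := fun i : Fin k => tm f hX g x π (i : ℕ))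
        (Set.Finite.bddAbove (Set.finite_range _)) (⟨t, ht⟩ : Fin k)
    · obtain ⟨s, rfl⟩ : ∃ s, t = k + s := ⟨t - k, by omega⟩
      refine le_trans ?_ (le_max_left _ _)
      rw [tm_shift hgnn x π k s]
      have hb : tm f hX g (traj f x π k) (pshift π k) s ≤ vval f D hX g (traj f x π k) := by
        rw [hvA]
        exact le_csSup (hA_bdd _) ⟨pshift π k, pshift_policy hπ, s, rfl⟩
      have hP := Pprod_pos (f := f) hgnn x π k
      have h2 : (1 - vval f D hX g (traj f x π k)) / Pprod f g x π k
          ≤ (1 - tm f hX g (traj f x π k) (pshift π k) s) / Pprod f g x π k :=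
        (div_le_div_iff_of_pos_right hP).mpr (by linarith)
      linarith
  · -- sSup B ≤ sSup A
    have h0A : 0 ≤ sSup (Aset f D hX g x) := by
      rw [← hvA x]
      exact vval_nonneg hnX hXnn hgnn x
    refine Real.sSup_le ?_ h0A
    rintro y ⟨π, hπ, rfl⟩
    refine max_le ?_ ?_
    · rw [hvA]
      have hP := Pprod_pos (f := f) hgnn x π k
      have hAkne : (Aset f D hX g (traj f x π k)).Nonempty :=
        ⟨tm f hX g (traj f x π k) π 0, π, hπ, 0, rfl⟩
      set s1 := sSup (Aset f D hX g x) with hs1def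
      have hb : sSup (Aset f D hX g (traj f x π k)) ≤ 1 - Pprod f g x π k * (1 - s1) := by
        refine csSup_le hAkne ?_
        rintro b ⟨σ, hσ, t, rfl⟩
        have hcat := tm_concat (f := f) (hX := hX) hgnn x π σ k t
        have hmem : tm f hX g x (pconcat π σ k) (k + t) ∈ Aset f D hX g x :=
          ⟨pconcat π σ k, pconcat_policy hπ hσ, k + t, rfl⟩
        have h1 : 1 - (1 - tm f hX g (traj f x π k) σ t) / Pprod f g x π k ≤ s1 := by
          rw [← hcat]
          exact le_csSup (hA_bdd x) hmem
        have h2 : 1 - s1 ≤ (1 - tm f hX g (traj f x π k) σ t) / Pprod f g x π k := by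
          linarith
        rw [le_div_iff₀ hP] at h2
        nlinarith
      have h5 : Pprod f g x π k * (1 - s1) ≤ 1 - sSup (Aset f D hX g (traj f x π k)) := by
        linarith
      have h6 : (Pprod f g x π k * (1 - s1)) / Pprod f g x π k
          ≤ (1 - sSup (Aset f D hX g (traj f x π k))) / Pprod f g x π k :=
        (div_le_div_iff_of_pos_right hP).mpr h5
      have h7 : (Pprod f g x π k * (1 - s1)) / Pprod f g x π k = 1 - s1 :=
        mul_div_cancel_left₀ _ (ne_of_gt hP)
      rw [h7] at h6
      linarith
    · refine ciSup_le fun i => ?_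
      exact le_csSup (hA_bdd x) ⟨π, hπ, (i : ℕ), rfl⟩
end
end
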